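/- Let A be a C*-algebra, r ≥ 2, and let e₁, …, e_r ∈ A be mutually orthogonal tripotents (e_i e_i* e_i = e_i and e_i □ e_j = 0 for i ≠ j). Let 2 ≤ m ≤ r and 1 ≤ j ≤ m−1. Then, as bounded linear maps on A, P₁(e_j) ∘ (∏_{i ∈ {1,…,m−1}, i ≠ j} P₀(e_i)) = P₁(e_j) ∘ (∏_{i ∈ {1,…,r}, i ≠ j} P₀(e_i)) + Σ_{k=m}^{r} P₁(e_j) ∘ P₁(e_k), where each product of projections is taken in increasing order of index (the Peirce projections of mutually orthogonal tripotents commute, so the order is immaterial). -/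

import Mathlib

/-- The box operator `e □ e` of a C*-algebra (as a JB*-triple):
`x ↦ {e,e,x} = (e e* x + x e* e)/2`. -/
noncomputable def boxSelf {A : Type*} [NonUnitalCStarAlgebra A] (e x : A) : A :=
  (2 : ℂ)⁻¹ • (e * star e * x + x * star e * e)

/-- The Peirce 2-projection `P₂(e) = 2(e□e)² − e□e`. -/
noncomputable def P2 {A : Type*} [NonUnitalCStarAlgebra A] (e x : A) : A :=
  (2 : ℂ) • boxSelf e (boxSelf e x) - boxSelf e x

/-- The Peirce 1-projection `P₁(e) = 4(e□e − (e□e)²)`. -/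
noncomputable def P1 {A : Type*} [NonUnitalCStarAlgebra A] (e x : A) : A :=
  (4 : ℂ) • (boxSelf e x - boxSelf e (boxSelf e x))

/-- The Peirce 0-projection `P₀(e) : x ↦ x − e e* x − x e* e + e e* x e* e`. -/
def P0 {A : Type*} [NonUnitalCStarAlgebra A] (e x : A) : A :=
  x - e * star e * x - x * star e * e + e * star e * x * star e * e

/-- Composition, in the order listed, of the maps `f i` for `i` running through a list `l`,
applied to `x`; for an increasing list this is the product taken in increasing index order. -/
def compList {A : Type*} (f : ℕ → A → A) (l : List ℕ) (x : A) : A :=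
  l.foldr (fun i y => f i y) x

section Aux
variable {A : Type*} [NonUnitalCStarAlgebra A]

lemma tri_star {u : A} (hu : u * star u * u = u) : star u * u * star u = star u := by
  have h := congrArg star hu
  simp only [star_mul, star_star, mul_assoc] at h ⊢
  exact h

lemma idem_a {u : A} (hu : u * star u * u = u) : (u * star u) * (u * star u) = u * star u := by
  calc (u * star u) * (u * star u) = (u * star u * u) * star u := by simp [mul_assoc]
  _ = u * star u := by rw [hu]

lemma idem_b {u : A} (hu : u * star u * u = u) : (star u * u) * (star u * u) = star u * u := by
  have h := tri_star hu
  calc (star u * u) * (star u * u) = (star u * u * star u) * u := by simp [mul_assoc]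
  _ = star u * u := by rw [h]

lemma ortho_zero {u v : A} (hu : u * star u * u = u)
    (h : ∀ x : A, v * star u * x + x * star u * v = 0) :
    star u * v = 0 ∧ v * star u = 0 := by
  have h0 := h u
  rw [mul_assoc] at h0
  have h1 : v * (star u * u) = - (u * star u * v) := eq_neg_of_add_eq_zero_left h0
  have h2 : u * star u * v = - (v * (star u * u)) := by rw [h1, neg_neg]
  have hav : u * star u * v = 0 := by
    have key : u * star u * v = - (u * star u * v) := by
      conv_lhs => rw [← idem_a hu, mul_assoc]
      calc (u * star u) * (u * star u * v)
          = (u * star u) * (- (v * (star u * u))) := by rw [h2]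
        _ = - ((u * star u) * (v * (star u * u))) := by rw [mul_neg]
        _ = - ((u * star u * v) * (star u * u)) := by rw [← mul_assoc]
        _ = - ((- (v * (star u * u))) * (star u * u)) := by rw [h2]
        _ = (v * (star u * u)) * (star u * u) := by rw [neg_mul, neg_neg]
        _ = v * ((star u * u) * (star u * u)) := by rw [mul_assoc]
        _ = v * (star u * u) := by rw [idem_b hu]
        _ = - (u * star u * v) := h1
    have h3 : (2 : ℂ) • (u * star u * v) = 0 := by
      rw [two_smul]
      nth_rewrite 2 [key]
      simp
    rcases smul_eq_zero.mp h3 with h4 | h4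
    · exact absurd h4 two_ne_zero
    · exact h4
  have hvb : v * (star u * u) = 0 := by rw [h1, hav, neg_zero]
  constructor
  · calc star u * v = ((star u * u) * star u) * v := by rw [tri_star hu]
      _ = star u * ((u * star u) * v) := by simp [mul_assoc]
      _ = 0 := by rw [hav, mul_zero]
  · calc v * star u = v * ((star u * u) * star u) := by rw [tri_star hu]
      _ = (v * (star u * u)) * star u := by simp [mul_assoc]
      _ = 0 := by rw [hvb, zero_mul]

lemma aux_zmul {p q : A} (h : p * q = 0) (y : A) : p * (q * y) = 0 := by
  rw [← mul_assoc, h, zero_mul]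

lemma aux_contr1 {e : A} (he : e * star e * e = e) (y : A) :
    e * (star e * (e * y)) = e * y := by
  have h := congrArg (fun z => z * y) he
  simpa only [mul_assoc] using h

lemma aux_contr2 {e : A} (he : e * star e * e = e) (y : A) :
    star e * (e * (star e * y)) = star e * y := by
  have hs : star e * e * star e = star e := by
    have h := congrArg star he
    simpa only [star_mul, star_star, mul_assoc] using h
  have h := congrArg (fun z => z * y) hs
  simpa only [mul_assoc] using h

lemma P1_eq {e : A} (he : e * star e * e = e) (x : A) :
    P1 e x = e * star e * x + x * star e * e - e * star e * x * star e * e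
      - e * star e * x * star e * e := by
  simp only [P1, boxSelf, smul_add, smul_sub, smul_smul, mul_smul_comm, smul_mul_assoc,
    mul_add, add_mul]
  norm_num
  simp only [mul_assoc, aux_contr1 he, aux_contr2 he, smul_smul]
  module

lemma P2_eq {e : A} (he : e * star e * e = e) (x : A) :
    P2 e x = e * star e * x * star e * e := by
  simp only [P2, boxSelf, smul_add, smul_sub, smul_smul, mul_smul_comm, smul_mul_assoc,
    mul_add, add_mul]
  norm_num
  simp only [mul_assoc, aux_contr1 he, aux_contr2 he, smul_smul]
  module

section pairs
variable {u v w : A}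

lemma P0P0_comm (z1 : star u * v = 0) (z2 : u * star v = 0)
    (z3 : star v * u = 0) (z4 : v * star u = 0) (x : A) :
    P0 u (P0 v x) = P0 v (P0 u x) := by
  simp only [P0, mul_add, add_mul, mul_sub, sub_mul, mul_assoc]
  simp only [aux_zmul z1, aux_zmul z2, aux_zmul z3, aux_zmul z4, z1, z2, z3, z4,
    mul_zero, zero_mul, add_zero, zero_add, sub_zero, zero_sub, neg_zero, neg_neg]
  try abel

lemma P0P1_comm (hv : v * star v * v = v) (z1 : star u * v = 0) (z2 : u * star v = 0)
    (z3 : star v * u = 0) (z4 : v * star u = 0) (x : A) :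
    P0 u (P1 v x) = P1 v (P0 u x) := by
  simp only [P0, P1_eq hv, mul_add, add_mul, mul_sub, sub_mul, mul_assoc]
  simp only [aux_zmul z1, aux_zmul z2, aux_zmul z3, aux_zmul z4, z1, z2, z3, z4,
    mul_zero, zero_mul, add_zero, zero_add, sub_zero, zero_sub, neg_zero, neg_neg]
  try abel

lemma P0P2_comm (hv : v * star v * v = v) (z1 : star u * v = 0) (z2 : u * star v = 0)
    (z3 : star v * u = 0) (z4 : v * star u = 0) (x : A) :
    P0 u (P2 v x) = P2 v (P0 u x) := by
  simp only [P0, P2_eq hv, mul_add, add_mul, mul_sub, sub_mul, mul_assoc]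
  simp only [aux_zmul z1, aux_zmul z2, aux_zmul z3, aux_zmul z4, z1, z2, z3, z4,
    mul_zero, zero_mul, add_zero, zero_add, sub_zero, zero_sub, neg_zero, neg_neg]
  try abel

lemma P1P2_zero (hu : u * star u * u = u) (hv : v * star v * v = v)
    (z1 : star u * v = 0) (z2 : u * star v = 0)
    (z3 : star v * u = 0) (z4 : v * star u = 0) (x : A) :
    P1 u (P2 v x) = 0 := by
  simp only [P1_eq hu, P2_eq hv, mul_add, add_mul, mul_sub, sub_mul, mul_assoc]
  simp only [aux_zmul z1, aux_zmul z2, aux_zmul z3, aux_zmul z4, z1, z2, z3, z4,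
    mul_zero, zero_mul, add_zero, zero_add, sub_zero, zero_sub, neg_zero, neg_neg]
  try abel

lemma P1P1_eq (hu : u * star u * u = u) (hv : v * star v * v = v)
    (z1 : star u * v = 0) (z2 : u * star v = 0)
    (z3 : star v * u = 0) (z4 : v * star u = 0) (x : A) :
    P1 u (P1 v x) = u * (star u * (x * (star v * v))) + v * (star v * (x * (star u * u))) := by
  simp only [P1_eq hu, P1_eq hv, mul_add, add_mul, mul_sub, sub_mul, mul_assoc]
  simp only [aux_zmul z1, aux_zmul z2, aux_zmul z3, aux_zmul z4, z1, z2, z3, z4,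
    mul_zero, zero_mul, add_zero, zero_add, sub_zero, zero_sub, neg_zero, neg_neg]
  try abel

lemma P1P1P0 (hu : u * star u * u = u) (hv : v * star v * v = v)
    (zuv1 : star u * v = 0) (zuv2 : u * star v = 0)
    (zuv3 : star v * u = 0) (zuv4 : v * star u = 0)
    (zuw1 : star u * w = 0) (zuw2 : u * star w = 0)
    (zuw3 : star w * u = 0) (zuw4 : w * star u = 0)
    (zvw1 : star v * w = 0) (zvw2 : v * star w = 0)
    (zvw3 : star w * v = 0) (zvw4 : w * star v = 0) (x : A) :
    P1 u (P1 v (P0 w x)) = P1 u (P1 v x) := by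
  rw [P1P1_eq hu hv zuv1 zuv2 zuv3 zuv4, P1P1_eq hu hv zuv1 zuv2 zuv3 zuv4]
  simp only [P0, mul_add, add_mul, mul_sub, sub_mul, mul_assoc]
  simp only [aux_zmul zuw1, aux_zmul zuw2, aux_zmul zuw3, aux_zmul zuw4,
    aux_zmul zvw1, aux_zmul zvw2, aux_zmul zvw3, aux_zmul zvw4,
    zuw1, zuw2, zuw3, zuw4, zvw1, zvw2, zvw3, zvw4,
    mul_zero, zero_mul, add_zero, zero_add, sub_zero, zero_sub, neg_zero, neg_neg]
  try abel

lemma P0_decomp {e : A} (he : e * star e * e = e) (x : A) :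
    P0 e x = x - P1 e x - P2 e x := by
  rw [P1_eq he, P2_eq he]
  simp only [P0]
  try abel

lemma P0_sub (e x y : A) : P0 e (x - y) = P0 e x - P0 e y := by
  simp only [P0, mul_sub, sub_mul]
  try abel

lemma P1_sub {e : A} (he : e * star e * e = e) (x y : A) :
    P1 e (x - y) = P1 e x - P1 e y := by
  simp only [P1_eq he, mul_sub, sub_mul]
  try abel
end pairs

section clist
variable (f : ℕ → A → A)

lemma compList_nil (x : A) : compList f [] x = x := rfl

lemma compList_cons (a : ℕ) (t : List ℕ) (x : A) :
    compList f (a :: t) x = f a (compList f t x) := rfl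

lemma compList_append (l1 l2 : List ℕ) (x : A) :
    compList f (l1 ++ l2) x = compList f l1 (compList f l2 x) := by
  simp [compList, List.foldr_append]

lemma compList_sub {l : List ℕ} (hf : ∀ i ∈ l, ∀ x y : A, f i (x - y) = f i x - f i y)
    (x y : A) : compList f l (x - y) = compList f l x - compList f l y := by
  induction l with
  | nil => rfl
  | cons a t ih =>
    simp only [compList_cons]
    rw [ih (fun i hi => hf i (List.mem_cons_of_mem a hi)),
      hf a List.mem_cons_self]

lemma compList_comm {l : List ℕ} (g : A → A)
    (hg : ∀ i ∈ l, ∀ y : A, f i (g y) = g (f i y)) (x : A) :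
    compList f l (g x) = g (compList f l x) := by
  induction l with
  | nil => rfl
  | cons a t ih =>
    simp only [compList_cons]
    rw [ih (fun i hi => hg i (List.mem_cons_of_mem a hi)),
      hg a List.mem_cons_self]

lemma compList_fix {l : List ℕ} (G : A → A)
    (hG : ∀ i ∈ l, ∀ y : A, G (f i y) = G y) (x : A) :
    G (compList f l x) = G x := by
  induction l with
  | nil => rfl
  | cons a t ih =>
    simp only [compList_cons]
    rw [hG a List.mem_cons_self, ih (fun i hi => hG i (List.mem_cons_of_mem a hi))]
end clist

end Aux

/-- A piece of Lemma 3.1 (ii) (for C*-algebras): for mutually orthogonal tripotents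
`e₁, …, e_r`, `2 ≤ m ≤ r` and `1 ≤ j ≤ m−1`,
`P₁(e_j) ∘ ∏_{i ≤ m−1, i ≠ j} P₀(e_i) = P₁(e_j) ∘ ∏_{i ≤ r, i ≠ j} P₀(e_i)
  + Σ_{k=m}^r P₁(e_j) ∘ P₁(e_k)`. -/
theorem stmt8 {A : Type*} [NonUnitalCStarAlgebra A] (r : ℕ) (hr : 2 ≤ r) (e : ℕ → A)
    (htri : ∀ i ∈ Finset.Icc 1 r, e i * star (e i) * e i = e i)
    (horth : ∀ i ∈ Finset.Icc 1 r, ∀ j ∈ Finset.Icc 1 r, i ≠ j →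
      ∀ x : A, e i * star (e j) * x + x * star (e j) * e i = 0)
    (m : ℕ) (hm2 : 2 ≤ m) (hmr : m ≤ r) (j : ℕ) (hj1 : 1 ≤ j) (hjm : j ≤ m - 1) :
    ∀ x : A,
      P1 (e j) (compList (fun i => P0 (e i)) ((List.range' 1 (m - 1)).filter (· ≠ j)) x)
        = P1 (e j) (compList (fun i => P0 (e i)) ((List.range' 1 r).filter (· ≠ j)) x)
          + ∑ k ∈ Finset.Icc m r, P1 (e j) (P1 (e k) x) := by
  intro x
  set f : ℕ → A → A := fun i => P0 (e i) with hfdef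
  set L : List ℕ := (List.range' 1 (m - 1)).filter (· ≠ j) with hLdef
  -- zero products for distinct pairs
  have hz : ∀ p ∈ Finset.Icc 1 r, ∀ q ∈ Finset.Icc 1 r, p ≠ q →
      star (e p) * e q = 0 ∧ e p * star (e q) = 0 := by
    intro p hp q hq hpq
    exact ⟨(ortho_zero (htri p hp) (fun y => horth q hq p hp (Ne.symm hpq) y)).1,
      (ortho_zero (htri q hq) (fun y => horth p hp q hq hpq y)).2⟩
  have hjIcc : j ∈ Finset.Icc 1 r := Finset.mem_Icc.mpr ⟨hj1, by omega⟩
  have hL : ∀ i ∈ L, 1 ≤ i ∧ i < m ∧ i ≠ j := by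
    intro i hi
    rw [hLdef, List.mem_filter] at hi
    have h1 := List.mem_range'_1.mp hi.1
    have h2 : i ≠ j := by simpa using hi.2
    exact ⟨h1.1, by omega, h2⟩
  have hLIcc : ∀ i ∈ L, i ∈ Finset.Icc 1 r := by
    intro i hi
    have := hL i hi
    exact Finset.mem_Icc.mpr ⟨this.1, by omega⟩
  -- main induction
  have main : ∀ c : ℕ, m + c ≤ r + 1 → ∀ y : A,
      P1 (e j) (compList f L y)
        = P1 (e j) (compList f L (compList f (List.range' m c) y))
          + ∑ k ∈ Finset.Ico m (m + c), P1 (e j) (P1 (e k) y) := by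
    intro c
    induction c with
    | zero => intro _ y; simp [compList_nil]
    | succ c ih =>
      intro hc y
      have hkr : m + c ≤ r := by omega
      have hkIcc : m + c ∈ Finset.Icc 1 r := Finset.mem_Icc.mpr ⟨by omega, hkr⟩
      have hkj : m + c ≠ j := by omega
      have hcomp : compList f (List.range' m (c + 1)) y
          = compList f (List.range' m c) (P0 (e (m + c)) y) := by
        have hsplit : List.range' m (c + 1) = List.range' m c ++ [m + c] := by
          simpa using (List.range'_concat : List.range' m (c + 1) 1 = _)
        rw [hsplit, compList_append]
        rfl
      -- decomposition step
      have hCsub := compList_sub f (l := L) (fun i _ x y => P0_sub (e i) x y)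
      have hC2 : compList f L (P2 (e (m + c)) (compList f L y)) = 0 → True := fun _ => trivial
      have hP2comm : compList f L (P2 (e (m + c)) y) = P2 (e (m + c)) (compList f L y) := by
        refine compList_comm f _ (fun i hi z => ?_) y
        have hi' := hL i hi
        have hiIcc := hLIcc i hi
        have hik : i ≠ m + c := by omega
        exact P0P2_comm (htri _ hkIcc) (hz _ hiIcc _ hkIcc hik).1 (hz _ hiIcc _ hkIcc hik).2
          (hz _ hkIcc _ hiIcc hik.symm).1 (hz _ hkIcc _ hiIcc hik.symm).2 z
      have hP1comm : compList f L (P1 (e (m + c)) y) = P1 (e (m + c)) (compList f L y) := by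
        refine compList_comm f _ (fun i hi z => ?_) y
        have hi' := hL i hi
        have hiIcc := hLIcc i hi
        have hik : i ≠ m + c := by omega
        exact P0P1_comm (htri _ hkIcc) (hz _ hiIcc _ hkIcc hik).1 (hz _ hiIcc _ hkIcc hik).2
          (hz _ hkIcc _ hiIcc hik.symm).1 (hz _ hkIcc _ hiIcc hik.symm).2 z
      have hjk1 := (hz _ hjIcc _ hkIcc (Ne.symm hkj)).1
      have hjk2 := (hz _ hjIcc _ hkIcc (Ne.symm hkj)).2
      have hjk3 := (hz _ hkIcc _ hjIcc hkj).1
      have hjk4 := (hz _ hkIcc _ hjIcc hkj).2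
      have hfix : P1 (e j) (P1 (e (m + c)) (compList f L y))
          = P1 (e j) (P1 (e (m + c)) y) := by
        refine compList_fix f (fun z => P1 (e j) (P1 (e (m + c)) z)) (fun i hi z => ?_) y
        have hi' := hL i hi
        have hiIcc := hLIcc i hi
        have hik : i ≠ m + c := by omega
        have hij : i ≠ j := hi'.2.2
        exact P1P1P0 (htri _ hjIcc) (htri _ hkIcc) hjk1 hjk2 hjk3 hjk4
          (hz _ hjIcc _ hiIcc (Ne.symm hij)).1 (hz _ hjIcc _ hiIcc (Ne.symm hij)).2
          (hz _ hiIcc _ hjIcc hij).1 (hz _ hiIcc _ hjIcc hij).2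
          (hz _ hkIcc _ hiIcc hik.symm).1 (hz _ hkIcc _ hiIcc hik.symm).2
          (hz _ hiIcc _ hkIcc hik).1 (hz _ hiIcc _ hkIcc hik).2 z
      have hzero : P1 (e j) (P2 (e (m + c)) (compList f L y)) = 0 :=
        P1P2_zero (htri _ hjIcc) (htri _ hkIcc) hjk1 hjk2 hjk3 hjk4 _
      have dec : P1 (e j) (compList f L (P0 (e (m + c)) y))
          = P1 (e j) (compList f L y) - P1 (e j) (P1 (e (m + c)) y) := by
        rw [P0_decomp (htri _ hkIcc) y, hCsub, hCsub, hP1comm, hP2comm,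
          P1_sub (htri _ hjIcc), P1_sub (htri _ hjIcc), hfix, hzero, sub_zero]
      have ihy := ih (by omega) (P0 (e (m + c)) y)
      have hsum : ∑ i ∈ Finset.Ico m (m + c), P1 (e j) (P1 (e i) (P0 (e (m + c)) y))
          = ∑ i ∈ Finset.Ico m (m + c), P1 (e j) (P1 (e i) y) := by
        refine Finset.sum_congr rfl (fun i hi => ?_)
        have hi' := Finset.mem_Ico.mp hi
        have hiIcc : i ∈ Finset.Icc 1 r := Finset.mem_Icc.mpr ⟨by omega, by omega⟩
        have hij : i ≠ j := by omega
        have hik : i ≠ m + c := by omega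
        exact P1P1P0 (htri _ hjIcc) (htri _ hiIcc)
          (hz _ hjIcc _ hiIcc (Ne.symm hij)).1 (hz _ hjIcc _ hiIcc (Ne.symm hij)).2
          (hz _ hiIcc _ hjIcc hij).1 (hz _ hiIcc _ hjIcc hij).2
          (hz _ hjIcc _ hkIcc (Ne.symm hkj)).1 (hz _ hjIcc _ hkIcc (Ne.symm hkj)).2
          (hz _ hkIcc _ hjIcc hkj).1 (hz _ hkIcc _ hjIcc hkj).2
          (hz _ hiIcc _ hkIcc hik).1 (hz _ hiIcc _ hkIcc hik).2
          (hz _ hkIcc _ hiIcc hik.symm).1 (hz _ hkIcc _ hiIcc hik.symm).2 y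
      rw [hsum, dec] at ihy
      have hIcoTop : m + (c + 1) = (m + c) + 1 := by omega
      rw [hcomp, hIcoTop, Finset.sum_Ico_succ_top (by omega : m ≤ m + c)]
      calc P1 (e j) (compList f L y)
          = (P1 (e j) (compList f L y) - P1 (e j) (P1 (e (m + c)) y))
            + P1 (e j) (P1 (e (m + c)) y) := by abel
        _ = (P1 (e j) (compList f L (compList f (List.range' m c) (P0 (e (m + c)) y)))
              + ∑ i ∈ Finset.Ico m (m + c), P1 (e j) (P1 (e i) y))
            + P1 (e j) (P1 (e (m + c)) y) := by rw [ihy]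
        _ = P1 (e j) (compList f L (compList f (List.range' m c) (P0 (e (m + c)) y)))
            + (∑ i ∈ Finset.Ico m (m + c), P1 (e j) (P1 (e i) y)
              + P1 (e j) (P1 (e (m + c)) y)) := by abel
  -- conclude
  have hrange : (List.range' 1 r).filter (· ≠ j) = L ++ List.range' m (r + 1 - m) := by
    have h := (List.range'_append : List.range' 1 (m-1) 1 ++ List.range' (1 + 1 * (m-1)) (r+1-m) 1 = List.range' 1 ((m-1) + (r+1-m)) 1)
    simp only [one_mul] at h
    have e1 : 1 + (m-1) = m := by omega
    have e2 : (m-1) + (r+1-m) = r := by omega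
    rw [e1, e2] at h
    rw [← h, List.filter_append, hLdef]
    congr 1
    apply List.filter_eq_self.mpr
    intro a ha
    have h2 := List.mem_range'_1.mp ha
    simpa using (by omega : a ≠ j)
  have hfin := main (r + 1 - m) (by omega) x
  have e3 : m + (r + 1 - m) = r + 1 := by omega
  rw [e3] at hfin
  rw [hrange, compList_append, ← Finset.Ico_add_one_right_eq_Icc]
  exact hfin
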